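/- Let n ≥ 1 and let f : {0,1}^n → ℝ be a nonzero function. Set ρ = (1/n) · log(E[f²]/(E|f|)²). Then E_x Σ_{y∼x} (f(x) − f(y))² ≥ C(ρ) · E[f²] · log(E[f²]/(E|f|)²), where C(x) = (4/x) · (1/2 − √(H⁻¹(log 2 − x)·(1 − H⁻¹(log 2 − x)))) for x ∈ (0, log 2] and C(0) = 2. -/

import Mathlib

/-- Expectation of `g` over the uniform measure on the Hamming cube `{0,1}^n`. -/
noncomputable def cubeE (n : ℕ) (g : (Fin n → Bool) → ℝ) : ℝ :=
  (∑ x : Fin n → Bool, g x) / 2 ^ n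

/-- `E_x ∑_{y ∼ x} (f x - f y)^2` on the Hamming cube `{0,1}^n`. -/
noncomputable def cubeD2 (n : ℕ) (f : (Fin n → Bool) → ℝ) : ℝ :=
  cubeE n (fun x => ∑ i : Fin n, (f x - f (Function.update x i (!x i))) ^ 2)

/-- `Ent(f²) = E[f² log f²] - E[f²] log E[f²]` (note `Real.log 0 = 0`). -/
noncomputable def cubeEnt (n : ℕ) (f : (Fin n → Bool) → ℝ) : ℝ :=
  cubeE n (fun x => f x ^ 2 * Real.log (f x ^ 2)) -
    cubeE n (fun x => f x ^ 2) * Real.log (cubeE n (fun x => f x ^ 2))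

/-- The function `C` of the modified inequalities, given an inverse `Hinv`
of the entropy function `H` on `[0,1/2]`: `C 0 = 2` and for `x ≠ 0`,
`C x = (4/x)·(1/2 − √(H⁻¹(log 2 − x)(1 − H⁻¹(log 2 − x))))`. -/
noncomputable def Cfun (Hinv : ℝ → ℝ) (x : ℝ) : ℝ :=
  if x = 0 then 2
  else (4 / x) *
    (1 / 2 - Real.sqrt (Hinv (Real.log 2 - x) * (1 - Hinv (Real.log 2 - x))))

open Real

noncomputable def Gfun (v : ℝ) : ℝ := 2 * Real.sqrt (v * (1 - v))
noncomputable def Bfun (t : ℝ) : ℝ :=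
  Real.sqrt (t * (1 - t)) * (Real.log (1 - t) - Real.log t) / (1 - 2 * t)
noncomputable def Btil (c : ℝ) : ℝ :=
  Real.sqrt (1 - c ^ 2) * (Real.log (1 + c) - Real.log (1 - c)) / (2 * c)

lemma two_mul_le_log_sub {c : ℝ} (hc0 : 0 ≤ c) (hc1 : c < 1) :
    2 * c ≤ Real.log (1 + c) - Real.log (1 - c) := by
  set φ : ℝ → ℝ := fun x => Real.log (1 + x) - Real.log (1 - x) - 2 * x with hφ
  have hmono : MonotoneOn φ (Set.Ico (0:ℝ) 1) := by
    apply monotoneOn_of_deriv_nonneg (convex_Ico 0 1)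
    · apply ContinuousOn.sub
      apply ContinuousOn.sub
      · exact (Real.continuousOn_log.comp (by fun_prop) (by
          intro x hx; simp only [Set.mem_Ico] at hx
          intro h; simp only [Set.mem_singleton_iff] at h; nlinarith))
      · exact (Real.continuousOn_log.comp (by fun_prop) (by
          intro x hx; simp only [Set.mem_Ico] at hx
          intro h; simp only [Set.mem_singleton_iff] at h; nlinarith))
      · fun_prop
    · intro x hx
      rw [interior_Ico] at hx
      obtain ⟨h0, h1⟩ := hx
      have h1p : (0:ℝ) < 1 + x := by linarith
      have h1m : (0:ℝ) < 1 - x := by linarith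
      have hd : HasDerivAt φ (1/(1+x) + 1/(1-x) - 2) x := by
        have d1 : HasDerivAt (fun y : ℝ => Real.log (1 + y)) (1/(1+x)) x := by
          have := ((hasDerivAt_id x).const_add 1).log (ne_of_gt h1p)
          simpa using this
        have d2 : HasDerivAt (fun y : ℝ => Real.log (1 - y)) (-(1/(1-x))) x := by
          have := ((hasDerivAt_id x).const_sub 1).log (ne_of_gt h1m)
          simpa [neg_div] using this
        have := (d1.sub d2).sub ((hasDerivAt_id x).const_mul 2)
        exact this.congr_deriv (by ring)
      exact hd.differentiableAt.differentiableWithinAt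
    · intro x hx
      rw [interior_Ico] at hx
      obtain ⟨h0, h1⟩ := hx
      have h1p : (0:ℝ) < 1 + x := by linarith
      have h1m : (0:ℝ) < 1 - x := by linarith
      have hd : HasDerivAt φ (1/(1+x) + 1/(1-x) - 2) x := by
        have d1 : HasDerivAt (fun y : ℝ => Real.log (1 + y)) (1/(1+x)) x := by
          have := ((hasDerivAt_id x).const_add 1).log (ne_of_gt h1p)
          simpa using this
        have d2 : HasDerivAt (fun y : ℝ => Real.log (1 - y)) (-(1/(1-x))) x := by
          have := ((hasDerivAt_id x).const_sub 1).log (ne_of_gt h1m)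
          simpa [neg_div] using this
        have := (d1.sub d2).sub ((hasDerivAt_id x).const_mul 2)
        exact this.congr_deriv (by ring)
      rw [hd.deriv]
      have h2 : (2:ℝ) ≤ 1/(1+x) + 1/(1-x) := by
        rw [div_add_div _ _ (ne_of_gt h1p) (ne_of_gt h1m), le_div_iff₀ (by positivity)]
        nlinarith
      linarith
  have h0 : φ 0 = 0 := by simp [hφ]
  have := hmono (Set.mem_Ico.mpr ⟨le_refl 0, by norm_num⟩) (Set.mem_Ico.mpr ⟨hc0, hc1⟩) hc0
  rw [h0] at this
  simp only [hφ] at this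
  linarith

lemma Btil_hasDerivAt {c : ℝ} (h0 : 0 < c) (h1 : c < 1) :
    HasDerivAt Btil
      (((-(2*c)/(2*Real.sqrt (1-c^2)) * (Real.log (1+c) - Real.log (1-c)) +
        Real.sqrt (1-c^2) * (1/(1+c) + 1/(1-c))) * (2*c) -
        Real.sqrt (1-c^2) * (Real.log (1+c) - Real.log (1-c)) * 2) / (2*c)^2) c := by
  have h1p : (0:ℝ) < 1 + c := by linarith
  have h1m : (0:ℝ) < 1 - c := by linarith
  have hc2 : (0:ℝ) < 1 - c^2 := by nlinarith
  have dq : HasDerivAt (fun x : ℝ => 1 - x^2) (-(2*c)) c := by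
    have := (hasDerivAt_pow 2 c).const_sub 1
    simpa using this
  have dsq : HasDerivAt (fun x : ℝ => Real.sqrt (1 - x^2)) (-(2*c)/(2*Real.sqrt (1-c^2))) c :=
    dq.sqrt (ne_of_gt hc2)
  have dL : HasDerivAt (fun x : ℝ => Real.log (1+x) - Real.log (1-x)) (1/(1+c) + 1/(1-c)) c := by
    have d1 : HasDerivAt (fun y : ℝ => Real.log (1 + y)) (1/(1+c)) c := by
      have := ((hasDerivAt_id c).const_add 1).log (ne_of_gt h1p)
      simpa using this
    have d2 : HasDerivAt (fun y : ℝ => Real.log (1 - y)) (-(1/(1-c))) c := by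
      have := ((hasDerivAt_id c).const_sub 1).log (ne_of_gt h1m)
      simpa [neg_div] using this
    have := d1.sub d2
    exact this.congr_deriv (by ring)
  have dden : HasDerivAt (fun x : ℝ => 2 * x) 2 c := by
    simpa using (hasDerivAt_id c).const_mul 2
  exact (dsq.mul dL).div dden (by positivity)

lemma Btil_anti : AntitoneOn Btil (Set.Ioo (0:ℝ) 1) := by
  apply antitoneOn_of_deriv_nonpos (convex_Ioo 0 1)
  · intro x hx
    exact (Btil_hasDerivAt hx.1 hx.2).differentiableAt.continuousAt.continuousWithinAt
  · rw [interior_Ioo]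
    intro x hx
    exact (Btil_hasDerivAt hx.1 hx.2).differentiableAt.differentiableWithinAt
  · rw [interior_Ioo]
    intro c hc
    obtain ⟨h0, h1⟩ := hc
    rw [(Btil_hasDerivAt h0 h1).deriv]
    have h1p : (0:ℝ) < 1 + c := by linarith
    have h1m : (0:ℝ) < 1 - c := by linarith
    have hc2 : (0:ℝ) < 1 - c^2 := by nlinarith
    have hs : (0:ℝ) < Real.sqrt (1-c^2) := Real.sqrt_pos.mpr hc2
    have hs2 : Real.sqrt (1-c^2)^2 = 1-c^2 := Real.sq_sqrt hc2.le
    have hL : 2*c ≤ Real.log (1+c) - Real.log (1-c) := two_mul_le_log_sub h0.le h1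
    apply div_nonpos_of_nonpos_of_nonneg _ (by positivity)
    set L := Real.log (1+c) - Real.log (1-c)
    set s := Real.sqrt (1-c^2)
    have e1 : 1/(1+c) + 1/(1-c) = 2/(1-c^2) := by
      rw [div_add_div _ _ (ne_of_gt h1p) (ne_of_gt h1m)]
      congr 1; ring; ring
    rw [e1]
    -- numerator = (-(2c)/(2s) L + s·2/(1-c²))·2c - s L 2 ; using s² = 1-c²
    have hss : s*s = 1-c^2 := by rw [← sq]; exact hs2
    have hsne : s ≠ 0 := ne_of_gt hs
    have key : (-(2*c)/(2*s) * L + s * (2/(1-c^2))) * (2*c) - s * L * 2 =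
        (2*(2*c - L)) / s := by
      rw [← hss]
      field_simp
      linear_combination (-L) * hs2
    rw [key]
    apply div_nonpos_of_nonpos_of_nonneg _ hs.le
    linarith

lemma Bfun_eq_Btil {u : ℝ} (h0 : 0 < u) (h1 : u < 1/2) : Bfun u = Btil (1 - 2*u) := by
  unfold Bfun Btil
  have h2 : (0:ℝ) < 1 - 2*u := by linarith
  have e1 : 1 - (1-2*u)^2 = 4 * (u * (1-u)) := by ring
  have e2 : Real.sqrt (1 - (1-2*u)^2) = 2 * Real.sqrt (u * (1-u)) := by
    rw [e1, show (4:ℝ) * (u*(1-u)) = 2^2 * (u*(1-u)) by norm_num,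
      Real.sqrt_mul (by positivity), Real.sqrt_sq (by norm_num : (0:ℝ) ≤ 2)]
  have e3 : (1:ℝ) + (1 - 2*u) = 2 * (1-u) := by ring
  have e4 : (1:ℝ) - (1 - 2*u) = 2 * u := by ring
  rw [e2, e3, e4, Real.log_mul (by norm_num) (ne_of_gt (by linarith : (0:ℝ) < 1-u)),
    Real.log_mul (by norm_num) (ne_of_gt h0)]
  field_simp
  ring

lemma Bfun_mono {u t : ℝ} (hu : 0 < u) (ht : t < 1/2) (hut : u ≤ t) : Bfun u ≤ Bfun t := by
  have ht0 : 0 < t := lt_of_lt_of_le hu hut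
  have hu1 : u < 1/2 := lt_of_le_of_lt hut ht
  rw [Bfun_eq_Btil hu hu1, Bfun_eq_Btil ht0 ht]
  apply Btil_anti
  · constructor <;> [linarith; linarith]
  · constructor <;> [linarith; linarith]
  · linarith

lemma Gfun_hasDerivAt {x : ℝ} (h0 : 0 < x) (h1 : x < 1) :
    HasDerivAt Gfun ((1 - 2*x) / Real.sqrt (x * (1-x))) x := by
  have hx2 : (0:ℝ) < x * (1-x) := by nlinarith
  have dq : HasDerivAt (fun y : ℝ => y * (1 - y)) (1 - 2*x) x := by
    have := (hasDerivAt_id x).mul ((hasDerivAt_id x).const_sub 1)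
    exact this.congr_deriv (by simp [id_eq]; ring)
  have dsq : HasDerivAt (fun y : ℝ => Real.sqrt (y * (1-y))) ((1-2*x)/(2*Real.sqrt (x*(1-x)))) x :=
    dq.sqrt (ne_of_gt hx2)
  have hs : (0:ℝ) < Real.sqrt (x*(1-x)) := Real.sqrt_pos.mpr hx2
  have h2 : HasDerivAt (fun v : ℝ => 2 * Real.sqrt (v*(1-v)))
      (2*((1-2*x)/(2*Real.sqrt (x*(1-x))))) x := dsq.const_mul 2
  have heq : 2*((1-2*x)/(2*Real.sqrt (x*(1-x)))) = (1-2*x)/Real.sqrt (x*(1-x)) := by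
    rw [← mul_div_assoc]
    exact mul_div_mul_left _ _ two_ne_zero
  rw [heq] at h2
  exact h2

lemma Gfun_symm (x : ℝ) : Gfun (1 - x) = Gfun x := by
  unfold Gfun
  congr 2
  ring

lemma Gfun_zero : Gfun 0 = 0 := by simp [Gfun]

lemma Gfun_nonneg (x : ℝ) : 0 ≤ Gfun x := by unfold Gfun; positivity

lemma Bfun_nonneg {t : ℝ} (h0 : 0 < t) (h1 : t < 1/2) : 0 ≤ Bfun t := by
  unfold Bfun
  have : Real.log t ≤ Real.log (1 - t) := Real.log_le_log h0 (by linarith)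
  have h2 : (0:ℝ) < 1 - 2*t := by linarith
  exact div_nonneg (mul_nonneg (Real.sqrt_nonneg _) (by linarith)) h2.le

lemma Bfun_deriv_identity {x : ℝ} (h0 : 0 < x) (h1 : x < 1/2) :
    Real.log (1-x) - Real.log x = Bfun x * ((1 - 2*x) / Real.sqrt (x * (1-x))) := by
  unfold Bfun
  have hx2 : (0:ℝ) < x * (1-x) := by nlinarith
  have hs : (0:ℝ) < Real.sqrt (x*(1-x)) := Real.sqrt_pos.mpr hx2
  have h2 : (0:ℝ) < 1 - 2*x := by linarith
  have hsx : (0:ℝ) < Real.sqrt x * Real.sqrt (1-x) := by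
    rw [← Real.sqrt_mul h0.le]; exact hs
  field_simp
  rw [mul_div_assoc, div_self (by linarith), mul_one]

lemma tangent_line {t : ℝ} (ht0 : 0 < t) (ht : t < 1/2) {ν : ℝ} (hν0 : 0 ≤ ν) (hν1 : ν ≤ 1) :
    Real.binEntropy t - Bfun t * Gfun t ≤ Real.binEntropy ν - Bfun t * Gfun ν := by
  set F : ℝ → ℝ := fun x => Real.binEntropy x - Bfun t * Gfun x with hF
  have hcont : Continuous F := by
    apply Real.binEntropy_continuous.sub
    apply continuous_const.mul
    unfold Gfun
    fun_prop
  have hderiv : ∀ x, 0 < x → x < 1/2 →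
      HasDerivAt F ((Bfun x - Bfun t) * ((1 - 2*x) / Real.sqrt (x * (1-x)))) x := by
    intro x h0 h1
    have hd := (Real.hasDerivAt_binEntropy (ne_of_gt h0) (by intro h; rw [h] at h1; norm_num at h1)).sub
      ((Gfun_hasDerivAt h0 (by linarith)).const_mul (Bfun t))
    have heq : Real.log (1-x) - Real.log x - Bfun t * ((1 - 2*x) / Real.sqrt (x * (1-x))) =
        (Bfun x - Bfun t) * ((1 - 2*x) / Real.sqrt (x * (1-x))) := by
      rw [Bfun_deriv_identity h0 h1]
      ring
    rw [heq] at hd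
    exact hd
  -- min at t on [0, 1/2]
  have hmain : ∀ x, 0 ≤ x → x ≤ 1/2 → F t ≤ F x := by
    intro x hx0 hx1
    rcases le_or_gt x t with hxt | htx
    · -- F antitone on [0, t]
      have hanti : AntitoneOn F (Set.Icc 0 t) := by
        apply antitoneOn_of_deriv_nonpos (convex_Icc 0 t) hcont.continuousOn
        · intro y hy
          rw [interior_Icc] at hy
          exact (hderiv y hy.1 (by linarith [hy.2])).differentiableAt.differentiableWithinAt
        · intro y hy
          rw [interior_Icc] at hy
          have hy2 : y < 1/2 := by linarith [hy.2]
          rw [(hderiv y hy.1 hy2).deriv]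
          apply mul_nonpos_of_nonpos_of_nonneg
          · have := Bfun_mono hy.1 ht (le_of_lt hy.2)
            linarith
          · apply div_nonneg (by linarith) (Real.sqrt_nonneg _)
      exact hanti (Set.mem_Icc.mpr ⟨hx0, hxt⟩) (Set.mem_Icc.mpr ⟨ht0.le, le_refl t⟩) hxt
    · -- F monotone on [t, 1/2]
      have hmono : MonotoneOn F (Set.Icc t (1/2)) := by
        apply monotoneOn_of_deriv_nonneg (convex_Icc t (1/2)) hcont.continuousOn
        · intro y hy
          rw [interior_Icc] at hy
          exact (hderiv y (lt_trans ht0 hy.1) hy.2).differentiableAt.differentiableWithinAt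
        · intro y hy
          rw [interior_Icc] at hy
          rw [(hderiv y (lt_trans ht0 hy.1) hy.2).deriv]
          apply mul_nonneg
          · have := Bfun_mono ht0 hy.2 (le_of_lt hy.1)
            linarith
          · apply div_nonneg (by linarith [hy.2]) (Real.sqrt_nonneg _)
      exact hmono (Set.mem_Icc.mpr ⟨le_refl t, by linarith⟩) (Set.mem_Icc.mpr ⟨htx.le, hx1⟩) htx.le
  rcases le_or_gt ν (1/2) with hn | hn
  · exact hmain ν hν0 hn
  · have hsym : F (1 - ν) = F ν := by
      simp only [hF]
      rw [Real.binEntropy_one_sub, Gfun_symm]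
    have := hmain (1 - ν) (by linarith) (by linarith)
    rw [hsym] at this
    exact this

lemma binEntropy_expand (t : ℝ) :
    Real.binEntropy t = -(t * Real.log t) - (1-t) * Real.log (1-t) := by
  simp [Real.binEntropy, Real.log_inv]; ring

noncomputable def cS1 (n : ℕ) (f : (Fin n → Bool) → ℝ) : ℝ := ∑ x : Fin n → Bool, f x
noncomputable def cS2 (n : ℕ) (f : (Fin n → Bool) → ℝ) : ℝ := ∑ x : Fin n → Bool, f x ^ 2
noncomputable def cXS (n : ℕ) (f : (Fin n → Bool) → ℝ) : ℝ :=
  ∑ i : Fin n, ∑ x : Fin n → Bool, f x * f (Function.update x i (!x i))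

lemma sum_cube_succ {n : ℕ} (g : (Fin (n+1) → Bool) → ℝ) :
    ∑ x : Fin (n+1) → Bool, g x =
      (∑ z : Fin n → Bool, g (Fin.cons true z)) + ∑ z : Fin n → Bool, g (Fin.cons false z) := by
  rw [← (Fin.consEquiv (fun _ : Fin (n+1) => Bool)).sum_comp g]
  rw [Fintype.sum_prod_type]
  rw [Fintype.sum_bool]
  rfl

lemma cS1_succ {n : ℕ} (f : (Fin (n+1) → Bool) → ℝ) :
    cS1 (n+1) f = cS1 n (fun z => f (Fin.cons true z)) + cS1 n (fun z => f (Fin.cons false z)) :=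
  sum_cube_succ f

lemma cS2_succ {n : ℕ} (f : (Fin (n+1) → Bool) → ℝ) :
    cS2 (n+1) f = cS2 n (fun z => f (Fin.cons true z)) + cS2 n (fun z => f (Fin.cons false z)) :=
  sum_cube_succ (fun x => f x ^ 2)

lemma cXS_succ {n : ℕ} (f : (Fin (n+1) → Bool) → ℝ) :
    cXS (n+1) f = cXS n (fun z => f (Fin.cons true z)) + cXS n (fun z => f (Fin.cons false z))
      + 2 * ∑ z : Fin n → Bool, f (Fin.cons true z) * f (Fin.cons false z) := by
  unfold cXS
  rw [Fin.sum_univ_succ]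
  have h0 : ∑ x : Fin (n+1) → Bool, f x * f (Function.update x 0 (!x 0)) =
      2 * ∑ z : Fin n → Bool, f (Fin.cons true z) * f (Fin.cons false z) := by
    rw [sum_cube_succ (fun x => f x * f (Function.update x 0 (!x 0)))]
    simp only [Fin.cons_zero, Fin.update_cons_zero, Bool.not_true, Bool.not_false]
    rw [two_mul]
    congr 1
    apply Finset.sum_congr rfl
    intro z _
    ring
  have hsucc : ∀ j : Fin n, ∑ x : Fin (n+1) → Bool, f x * f (Function.update x j.succ (!x j.succ)) =
      (∑ z : Fin n → Bool, (fun z => f (Fin.cons true z)) z *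
        (fun z => f (Fin.cons true z)) (Function.update z j (!z j))) +
      ∑ z : Fin n → Bool, (fun z => f (Fin.cons false z)) z *
        (fun z => f (Fin.cons false z)) (Function.update z j (!z j)) := by
    intro j
    rw [sum_cube_succ (fun x => f x * f (Function.update x j.succ (!x j.succ)))]
    simp only [Fin.cons_succ, ← Fin.cons_update]
  rw [h0]
  simp only [hsucc]
  rw [Finset.sum_add_distrib]
  ring

lemma flip_involutive (n : ℕ) (i : Fin n) :
    Function.Involutive (fun x : Fin n → Bool => Function.update x i (!x i)) := by
  intro x
  simp only [Function.update_self]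
  rw [Bool.not_not]
  ext j
  rcases eq_or_ne j i with rfl | hj
  · simp
  · simp [Function.update_of_ne hj]

lemma sum_flip {n : ℕ} (i : Fin n) (h : (Fin n → Bool) → ℝ) :
    ∑ x : Fin n → Bool, h (Function.update x i (!x i)) = ∑ x : Fin n → Bool, h x :=
  Function.Bijective.sum_comp (flip_involutive n i).bijective h

lemma cubeD2_eq (n : ℕ) (h : (Fin n → Bool) → ℝ) :
    cubeD2 n h = (2 * n * cS2 n h - 2 * cXS n h) / 2 ^ n := by
  unfold cubeD2 cubeE
  congr 1
  rw [Finset.sum_comm]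
  have e1 : ∀ i : Fin n, ∑ x : Fin n → Bool, (h x - h (Function.update x i (!x i))) ^ 2 =
      2 * cS2 n h - 2 * ∑ x : Fin n → Bool, h x * h (Function.update x i (!x i)) := by
    intro i
    have e2 : ∀ x : Fin n → Bool, (h x - h (Function.update x i (!x i))) ^ 2 =
        h x ^ 2 + (h (Function.update x i (!x i)))^2
          - 2 * (h x * h (Function.update x i (!x i))) := by
      intro x; ring
    rw [Finset.sum_congr rfl (fun x _ => e2 x)]
    rw [Finset.sum_sub_distrib, Finset.sum_add_distrib]
    rw [sum_flip i (fun y => h y ^ 2)]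
    unfold cS2
    rw [← Finset.mul_sum]
    ring
  rw [Finset.sum_congr rfl (fun i _ => e1 i)]
  rw [Finset.sum_sub_distrib]
  rw [Finset.sum_const, Finset.card_univ, Fintype.card_fin]
  unfold cXS
  rw [← Finset.mul_sum]
  ring_nf

lemma LC (A B : ℝ) (hB : 0 ≤ B)
    (hP : ∀ ν : ℝ, 0 ≤ ν → ν ≤ 1 → Real.log 2 ≤ Real.binEntropy ν + A - B * Gfun ν) :
    ∀ (n : ℕ) (f : (Fin n → Bool) → ℝ), (∀ x, 0 ≤ f x) → 0 < cS1 n f →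
      B * cXS n f + cS2 n f *
        (Real.log (cS2 n f) - 2 * Real.log (cS1 n f) + n * (Real.log 2 - A)) ≤ 0 := by
  have hA : Real.log 2 ≤ A := by
    have := hP 0 le_rfl zero_le_one
    rw [Real.binEntropy_zero, Gfun_zero] at this
    linarith
  intro n
  induction n with
  | zero =>
    intro f hf hS1
    have huniv : (Finset.univ : Finset (Fin 0 → Bool)) = {fun i => i.elim0} := by
      apply Finset.eq_of_subset_of_card_le
      · intro x _; simp; funext i; exact i.elim0
      · simp
    have hS1v : cS1 0 f = f (fun i => i.elim0) := by
      unfold cS1; rw [huniv, Finset.sum_singleton]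
    have hS2v : cS2 0 f = f (fun i => i.elim0) ^ 2 := by
      unfold cS2; rw [huniv, Finset.sum_singleton]
    have hXSv : cXS 0 f = 0 := by
      unfold cXS; simp
    rw [hS1v] at hS1
    rw [hS1v, hS2v, hXSv]
    rw [Real.log_pow]
    push_cast
    ring_nf
    simp
  | succ n ih =>
    intro f hf hS1
    set f₁ := fun z : Fin n → Bool => f (Fin.cons true z) with hf₁
    set f₀ := fun z : Fin n → Bool => f (Fin.cons false z) with hf₀
    have hf₁n : ∀ z, 0 ≤ f₁ z := fun z => hf _
    have hf₀n : ∀ z, 0 ≤ f₀ z := fun z => hf _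
    have hS1s : cS1 (n+1) f = cS1 n f₁ + cS1 n f₀ := cS1_succ f
    have hS2s : cS2 (n+1) f = cS2 n f₁ + cS2 n f₀ := cS2_succ f
    set m := ∑ z : Fin n → Bool, f₁ z * f₀ z with hm
    have hXSs : cXS (n+1) f = cXS n f₁ + cXS n f₀ + 2 * m := cXS_succ f
    have hS1₁nn : 0 ≤ cS1 n f₁ := Finset.sum_nonneg (fun z _ => hf₁n z)
    have hS1₀nn : 0 ≤ cS1 n f₀ := Finset.sum_nonneg (fun z _ => hf₀n z)
    have hS2₁nn : 0 ≤ cS2 n f₁ := Finset.sum_nonneg (fun z _ => sq_nonneg _)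
    have hS2₀nn : 0 ≤ cS2 n f₀ := Finset.sum_nonneg (fun z _ => sq_nonneg _)
    -- zero lemmas
    have zero_of_S1 : ∀ g : (Fin n → Bool) → ℝ, (∀ z, 0 ≤ g z) → cS1 n g = 0 →
        (cS2 n g = 0 ∧ cXS n g = 0 ∧ ∀ z, g z = 0) := by
      intro g hg h0
      have hz : ∀ z ∈ (Finset.univ : Finset (Fin n → Bool)), g z = 0 := by
        rw [← Finset.sum_eq_zero_iff_of_nonneg (fun z _ => hg z)]
        exact h0
      have hz' : ∀ z, g z = 0 := fun z => hz z (Finset.mem_univ z)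
      refine ⟨?_, ?_, hz'⟩
      · unfold cS2; apply Finset.sum_eq_zero; intro z _; rw [hz']; ring
      · unfold cXS; apply Finset.sum_eq_zero; intro i _
        apply Finset.sum_eq_zero; intro z _; rw [hz']; ring
    rcases eq_or_lt_of_le hS1₀nn with hS10 | hS10
    · -- f₀ ≡ 0
      obtain ⟨h2, hx, hzz⟩ := zero_of_S1 f₀ hf₀n hS10.symm
      have hm0 : m = 0 := by
        rw [hm]; apply Finset.sum_eq_zero; intro z _; rw [hzz]; ring
      have hS1' : cS1 (n+1) f = cS1 n f₁ := by rw [hS1s, ← hS10]; ring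
      have hS2' : cS2 (n+1) f = cS2 n f₁ := by rw [hS2s, h2]; ring
      have hXS' : cXS (n+1) f = cXS n f₁ := by rw [hXSs, hx, hm0]; ring
      rw [hS1', hS2', hXS']
      have hS1p : 0 < cS1 n f₁ := by rw [hS1'] at hS1; exact hS1
      have := ih f₁ hf₁n hS1p
      have hextra : cS2 n f₁ * (Real.log 2 - A) ≤ 0 :=
        mul_nonpos_of_nonneg_of_nonpos hS2₁nn (by linarith)
      push_cast
      push_cast at this
      nlinarith [this, hextra]
    rcases eq_or_lt_of_le hS1₁nn with hS11 | hS11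
    · -- f₁ ≡ 0
      obtain ⟨h2, hx, hzz⟩ := zero_of_S1 f₁ hf₁n hS11.symm
      have hm0 : m = 0 := by
        rw [hm]; apply Finset.sum_eq_zero; intro z _; rw [hzz]; ring
      have hS1' : cS1 (n+1) f = cS1 n f₀ := by rw [hS1s, ← hS11]; ring
      have hS2' : cS2 (n+1) f = cS2 n f₀ := by rw [hS2s, h2]; ring
      have hXS' : cXS (n+1) f = cXS n f₀ := by rw [hXSs, hx, hm0]; ring
      rw [hS1', hS2', hXS']
      have hS1p : 0 < cS1 n f₀ := by rw [hS1'] at hS1; exact hS1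
      have := ih f₀ hf₀n hS1p
      have hextra : cS2 n f₀ * (Real.log 2 - A) ≤ 0 :=
        mul_nonpos_of_nonneg_of_nonpos hS2₀nn (by linarith)
      push_cast
      push_cast at this
      nlinarith [this, hextra]
    -- main case
    have hS2₁p : 0 < cS2 n f₁ := by
      rcases eq_or_lt_of_le hS2₁nn with h | h
      · exfalso
        have : ∀ z ∈ (Finset.univ : Finset (Fin n → Bool)), f₁ z ^ 2 = 0 := by
          rw [← Finset.sum_eq_zero_iff_of_nonneg (fun z _ => sq_nonneg (f₁ z))]
          exact h.symm
        have hz : ∀ z, f₁ z = 0 := by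
          intro z; have := this z (Finset.mem_univ z); exact pow_eq_zero_iff (by norm_num) |>.mp this
        have : cS1 n f₁ = 0 := Finset.sum_eq_zero (fun z _ => hz z)
        linarith
      · exact h
    have hS2₀p : 0 < cS2 n f₀ := by
      rcases eq_or_lt_of_le hS2₀nn with h | h
      · exfalso
        have : ∀ z ∈ (Finset.univ : Finset (Fin n → Bool)), f₀ z ^ 2 = 0 := by
          rw [← Finset.sum_eq_zero_iff_of_nonneg (fun z _ => sq_nonneg (f₀ z))]
          exact h.symm
        have hz : ∀ z, f₀ z = 0 := by
          intro z; have := this z (Finset.mem_univ z); exact pow_eq_zero_iff (by norm_num) |>.mp this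
        have : cS1 n f₀ = 0 := Finset.sum_eq_zero (fun z _ => hz z)
        linarith
      · exact h
    set S := cS2 n f₁ + cS2 n f₀ with hSdef
    have hSp : 0 < S := by positivity
    set ν := cS2 n f₁ / S with hνdef
    have hν0 : 0 < ν := div_pos hS2₁p hSp
    have hν1 : ν < 1 := by
      rw [hνdef, div_lt_one hSp]
      linarith
    have hS2₁eq : cS2 n f₁ = ν * S := by
      rw [hνdef]; field_simp
    have hS2₀eq : cS2 n f₀ = (1 - ν) * S := by
      rw [hνdef]; field_simp
      linarith [hSdef]
    have hlogS2₁ : Real.log (cS2 n f₁) = Real.log ν + Real.log S := by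
      rw [hS2₁eq, Real.log_mul (ne_of_gt hν0) (ne_of_gt hSp)]
    have hlogS2₀ : Real.log (cS2 n f₀) = Real.log (1 - ν) + Real.log S := by
      rw [hS2₀eq, Real.log_mul (by linarith) (ne_of_gt hSp)]
    -- Cauchy-Schwarz for m
    have hm0 : 0 ≤ m := Finset.sum_nonneg (fun z _ => mul_nonneg (hf₁n z) (hf₀n z))
    have hm2 : m ^ 2 ≤ cS2 n f₁ * cS2 n f₀ :=
      Finset.sum_mul_sq_le_sq_mul_sq Finset.univ f₁ f₀
    have hmsqrt : m ≤ Real.sqrt (cS2 n f₁ * cS2 n f₀) := by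
      rw [show m = Real.sqrt (m^2) from (Real.sqrt_sq hm0).symm]
      exact Real.sqrt_le_sqrt hm2
    have hGS : S * Gfun ν = 2 * Real.sqrt (cS2 n f₁ * cS2 n f₀) := by
      unfold Gfun
      have e1 : ν * (1 - ν) = (cS2 n f₁ * cS2 n f₀) / S^2 := by
        rw [hνdef]; field_simp; ring
      rw [e1, Real.sqrt_div (mul_nonneg hS2₁nn hS2₀nn), Real.sqrt_sq hSp.le]
      field_simp
    have hmS : 2 * m ≤ S * Gfun ν := by
      rw [hGS]; linarith [hmsqrt]
    have h1ν : (0:ℝ) < 1 - ν := by linarith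
    have hAM : (1-ν) * Real.log (cS1 n f₀) + ν * Real.log (cS1 n f₁) + Real.binEntropy ν
        ≤ Real.log (cS1 n f₁ + cS1 n f₀) := by
      have hp₁ : (0:ℝ) < cS1 n f₀ / (1-ν) := div_pos hS10 h1ν
      have hp₂ : (0:ℝ) < cS1 n f₁ / ν := div_pos hS11 hν0
      have hgm := Real.geom_mean_le_arith_mean2_weighted h1ν.le hν0.le hp₁.le hp₂.le
        (by ring : (1-ν) + ν = 1)
      have hrhs : (1-ν) * (cS1 n f₀/(1-ν)) + ν * (cS1 n f₁/ν) = cS1 n f₁ + cS1 n f₀ := by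
        field_simp
        ring
      rw [hrhs] at hgm
      have hlhs_pos : (0:ℝ) < (cS1 n f₀/(1-ν)) ^ ((1:ℝ)-ν) * (cS1 n f₁/ν) ^ ν :=
        mul_pos (Real.rpow_pos_of_pos hp₁ _) (Real.rpow_pos_of_pos hp₂ _)
      have hlog := Real.log_le_log hlhs_pos hgm
      rw [Real.log_mul (ne_of_gt (Real.rpow_pos_of_pos hp₁ _)) (ne_of_gt (Real.rpow_pos_of_pos hp₂ _)),
        Real.log_rpow hp₁, Real.log_rpow hp₂,
        Real.log_div (ne_of_gt hS10) (ne_of_gt h1ν),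
        Real.log_div (ne_of_gt hS11) (ne_of_gt hν0)] at hlog
      rw [binEntropy_expand]
      linarith [hlog]
    have hPν := hP ν hν0.le hν1.le
    have IH₁ := ih f₁ hf₁n hS11
    have IH₀ := ih f₀ hf₀n hS10
    rw [hlogS2₁, hS2₁eq] at IH₁
    rw [hlogS2₀, hS2₀eq] at IH₀
    rw [hXSs, hS2s, hS1s]
    have hAMS : 2*S*((1-ν) * Real.log (cS1 n f₀) + ν * Real.log (cS1 n f₁) + Real.binEntropy ν)
        ≤ 2*S*Real.log (cS1 n f₁ + cS1 n f₀) :=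
      mul_le_mul_of_nonneg_left hAM (by positivity)
    have hmB : B*(2*m) ≤ B*(S*Gfun ν) := mul_le_mul_of_nonneg_left hmS hB
    have hPSn : S*(Real.log 2 - A - Real.binEntropy ν + B*Gfun ν) ≤ 0 :=
      mul_nonpos_of_nonneg_of_nonpos hSp.le (by linarith)
    have hHS : S * Real.binEntropy ν = S*(-(ν*Real.log ν) - (1-ν)*Real.log (1-ν)) := by
      rw [binEntropy_expand]
    push_cast
    linarith [IH₁, IH₀, hAMS, hmB, hPSn, hHS]

lemma Bfun_pos {t : ℝ} (h0 : 0 < t) (h1 : t < 1/2) : 0 < Bfun t := by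
  unfold Bfun
  apply div_pos
  · apply mul_pos
    · apply Real.sqrt_pos.mpr; nlinarith
    · have : Real.log t < Real.log (1-t) := Real.log_lt_log h0 (by linarith)
      linarith
  · linarith

lemma sq_abs_sub_le (a b : ℝ) : (|a| - |b|)^2 ≤ (a - b)^2 := by
  calc (|a| - |b|)^2 = |(|a| - |b|)|^2 := (sq_abs _).symm
    _ ≤ |a - b|^2 := pow_le_pow_left₀ (abs_nonneg _) (abs_abs_sub_abs_le_abs_sub a b) 2
    _ = (a - b)^2 := sq_abs _

lemma cubeD2_abs_le (n : ℕ) (f : (Fin n → Bool) → ℝ) :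
    cubeD2 n (fun x => |f x|) ≤ cubeD2 n f := by
  unfold cubeD2 cubeE
  apply (div_le_div_iff_of_pos_right (show (0:ℝ) < 2^n by positivity)).mpr
  apply Finset.sum_le_sum
  intro x _
  apply Finset.sum_le_sum
  intro i _
  exact sq_abs_sub_le _ _

lemma cubeD2_nonneg (n : ℕ) (f : (Fin n → Bool) → ℝ) : 0 ≤ cubeD2 n f := by
  unfold cubeD2 cubeE
  apply div_nonneg _ (by positivity)
  apply Finset.sum_nonneg
  intro x _
  apply Finset.sum_nonneg
  intro i _
  positivity

lemma XS_eq_zero_of_S2_eq_sq {n : ℕ} (g : (Fin n → Bool) → ℝ) (hg : ∀ x, 0 ≤ g x)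
    (heq : cS2 n g = (cS1 n g)^2) : cXS n g = 0 := by
  have hXi_le : ∀ i : Fin n, ∑ x : Fin n → Bool, g x * g (Function.update x i (!x i))
      ≤ (cS1 n g)^2 - cS2 n g := by
    intro i
    have hpt : ∀ x : Fin n → Bool, g x * g (Function.update x i (!x i))
        ≤ g x * (cS1 n g - g x) := by
      intro x
      apply mul_le_mul_of_nonneg_left _ (hg x)
      have hne : Function.update x i (!x i) ≠ x := by
        intro h
        have h2 := congrFun h i
        rw [Function.update_self] at h2
        cases hxi : x i <;> rw [hxi] at h2 <;> simp at h2
      have hsum : g (Function.update x i (!x i)) + g x ≤ cS1 n g := by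
        have hsub : ({Function.update x i (!x i), x} : Finset (Fin n → Bool)) ⊆ Finset.univ :=
          Finset.subset_univ _
        have h3 := Finset.sum_le_sum_of_subset_of_nonneg hsub (fun y _ _ => hg y)
        rw [Finset.sum_pair hne] at h3
        exact h3
      linarith
    have e : ∀ x : Fin n → Bool, g x * (cS1 n g - g x) = g x * cS1 n g - g x^2 := by
      intro x; ring
    calc ∑ x : Fin n → Bool, g x * g (Function.update x i (!x i))
        ≤ ∑ x : Fin n → Bool, g x * (cS1 n g - g x) := Finset.sum_le_sum (fun x _ => hpt x)
      _ = (cS1 n g)^2 - cS2 n g := by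
          rw [Finset.sum_congr rfl (fun x _ => e x), Finset.sum_sub_distrib, ← Finset.sum_mul]
          unfold cS1 cS2
          ring
  have hXi_nn : ∀ i : Fin n, 0 ≤ ∑ x : Fin n → Bool, g x * g (Function.update x i (!x i)) :=
    fun i => Finset.sum_nonneg (fun x _ => mul_nonneg (hg x) (hg _))
  unfold cXS
  apply le_antisymm
  · apply Finset.sum_nonpos
    intro i _
    calc ∑ x : Fin n → Bool, g x * g (Function.update x i (!x i))
        ≤ (cS1 n g)^2 - cS2 n g := hXi_le i
      _ = 0 := by rw [heq]; ring
  · exact Finset.sum_nonneg (fun i _ => hXi_nn i)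

set_option maxHeartbeats 1000000

/-- **Modified functional edge-isoperimetric inequality** on the Hamming cube:
for nonzero `f : {0,1}^n → ℝ` and `ρ = (1/n)·log(E[f²]/(E|f|)²)`,
`E_x ∑_{y∼x} (f x − f y)² ≥ C(ρ)·E[f²]·log(E[f²]/(E|f|)²)`. -/
theorem modified_functional_isoperimetry (n : ℕ) (hn : 1 ≤ n)
    (f : (Fin n → Bool) → ℝ) (hf : f ≠ 0)
    (Hinv : ℝ → ℝ)
    (hHinv : ∀ y ∈ Set.Icc (0 : ℝ) (Real.log 2),
      Hinv y ∈ Set.Icc (0 : ℝ) (1 / 2) ∧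
        -(Hinv y) * Real.log (Hinv y) - (1 - Hinv y) * Real.log (1 - Hinv y) = y) :
    cubeD2 n f ≥
      Cfun Hinv
          (Real.log (cubeE n (fun x => f x ^ 2) / (cubeE n (fun x => |f x|)) ^ 2) / n) *
        (cubeE n (fun x => f x ^ 2) *
          Real.log (cubeE n (fun x => f x ^ 2) / (cubeE n (fun x => |f x|)) ^ 2)) := by
  have hn' : (0:ℝ) < n := by
    have : 0 < n := lt_of_lt_of_le one_pos hn
    exact_mod_cast this
  set g : (Fin n → Bool) → ℝ := fun x => |f x| with hg
  have hgnn : ∀ x, 0 ≤ g x := fun x => abs_nonneg _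
  have hex : ∃ x, f x ≠ 0 := by
    by_contra h
    push_neg at h
    exact hf (funext h)
  obtain ⟨x₀, hx₀⟩ := hex
  have hS1p : 0 < cS1 n g := by
    apply Finset.sum_pos' (fun x _ => hgnn x)
    exact ⟨x₀, Finset.mem_univ _, abs_pos.mpr hx₀⟩
  have hS2p : 0 < cS2 n g := by
    apply Finset.sum_pos' (fun x _ => sq_nonneg _)
    refine ⟨x₀, Finset.mem_univ _, ?_⟩
    have : g x₀ ≠ 0 := fun h => hx₀ (abs_eq_zero.mp h)
    positivity
  have hE2 : cubeE n (fun x => f x ^ 2) = cS2 n g / 2^n := by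
    unfold cubeE cS2
    congr 1
    exact Finset.sum_congr rfl (fun x _ => (sq_abs (f x)).symm)
  have hE1 : cubeE n g = cS1 n g / 2^n := rfl
  have h2n : (0:ℝ) < 2^n := by positivity
  set R := cubeE n (fun x => f x ^ 2) / cubeE n g ^ 2 with hRdef
  have hRval : R = 2^n * cS2 n g / (cS1 n g)^2 := by
    rw [hRdef, hE2, hE1]
    field_simp
  have hRpos : 0 < R := by
    rw [hRval]; positivity
  -- Cauchy-Schwarz : S1^2 ≤ 2^n S2
  have hCS : (cS1 n g)^2 ≤ 2^n * cS2 n g := by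
    have h := Finset.sum_mul_sq_le_sq_mul_sq Finset.univ g (fun _ => (1:ℝ))
    simp only [mul_one, one_pow] at h
    rw [Finset.sum_const, Finset.card_univ] at h
    have hcard : (Fintype.card (Fin n → Bool) : ℝ) = 2^n := by
      rw [Fintype.card_fun]
      simp
    unfold cS1 cS2
    calc (∑ x : Fin n → Bool, g x)^2 ≤ (∑ x : Fin n → Bool, g x ^2) * (Fintype.card (Fin n → Bool) • (1:ℝ)) := by
          simpa using h
      _ = 2^n * ∑ x : Fin n → Bool, g x ^2 := by
          rw [nsmul_eq_mul, mul_one, hcard]; ring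
  have hR1 : 1 ≤ R := by
    rw [hRval, le_div_iff₀ (by positivity)]
    linarith
  have hlogRnn : 0 ≤ Real.log R := Real.log_nonneg hR1
  rcases eq_or_lt_of_le hlogRnn with hlog0 | hlogpos
  · -- log R = 0
    rw [← hlog0]
    simp only [mul_zero, zero_mul]
    exact le_of_le_of_eq (cubeD2_nonneg n f) (by ring)
  -- main case : log R > 0
  set ρ := Real.log R / n with hρdef
  have hρpos : 0 < ρ := div_pos hlogpos hn'
  have hlogRρ : Real.log R = ρ * n := by
    rw [hρdef]; field_simp
  -- ρ ≤ log 2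
  have hS2S1 : cS2 n g ≤ (cS1 n g)^2 := by
    have h1 : ∀ x : Fin n → Bool, g x ^ 2 ≤ g x * cS1 n g := by
      intro x
      have hle : g x ≤ cS1 n g := Finset.single_le_sum (fun y _ => hgnn y) (Finset.mem_univ x)
      calc g x ^ 2 = g x * g x := sq (g x)
        _ ≤ g x * cS1 n g := mul_le_mul_of_nonneg_left hle (hgnn x)
    calc cS2 n g ≤ ∑ x : Fin n → Bool, g x * cS1 n g := Finset.sum_le_sum (fun x _ => h1 x)
      _ = (cS1 n g)^2 := by rw [← Finset.sum_mul]; unfold cS1; ring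
  have hRle : R ≤ 2^n := by
    rw [hRval, div_le_iff₀ (by positivity)]
    nlinarith [hS2S1]
  have hρle : ρ ≤ Real.log 2 := by
    have h1 : Real.log R ≤ n * Real.log 2 := by
      calc Real.log R ≤ Real.log (2^n) := Real.log_le_log hRpos hRle
        _ = n * Real.log 2 := by rw [Real.log_pow]
    rw [hρdef, div_le_iff₀ hn']
    linarith
  have hy : Real.log 2 - ρ ∈ Set.Icc (0:ℝ) (Real.log 2) := ⟨by linarith, by linarith⟩
  obtain ⟨⟨ht0, ht2⟩, htH⟩ := hHinv _ hy
  set t := Hinv (Real.log 2 - ρ) with htdef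
  have htHb : Real.binEntropy t = Real.log 2 - ρ := by
    rw [binEntropy_expand]
    linarith [htH]
  have hCfun : Cfun Hinv ρ = (4/ρ) * (1/2 - Real.sqrt (t * (1-t))) := by
    unfold Cfun
    rw [if_neg (ne_of_gt hρpos)]
  rcases eq_or_lt_of_le ht0 with ht00 | ht0p
  · -- t = 0 case: ρ = log 2 and S2 = S1²
    have hbt : Real.binEntropy t = 0 := by rw [← ht00]; exact Real.binEntropy_zero
    have hρval : ρ = Real.log 2 := by rw [hbt] at htHb; linarith
    have hlogR2 : Real.log R = Real.log (2^n) := by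
      rw [hlogRρ, hρval, Real.log_pow]; ring
    have hR2 : R = 2^n := by
      have := Real.exp_log hRpos
      rw [hlogR2] at this
      rw [← this, Real.exp_log (by positivity : (0:ℝ) < 2^n)]
    have hS2eqS1 : cS2 n g = (cS1 n g)^2 := by
      rw [hRval] at hR2
      field_simp at hR2
      nlinarith [hR2, h2n]
    have hXS0 : cXS n g = 0 := XS_eq_zero_of_S2_eq_sq g hgnn hS2eqS1
    have hD2g : cubeD2 n g = 2 * n * cS2 n g / 2^n := by
      rw [cubeD2_eq, hXS0]; ring_nf
    have hRHS : Cfun Hinv ρ * (cubeE n (fun x => f x ^ 2) * Real.log R)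
        = 2 * n * cS2 n g / 2^n := by
      rw [hCfun, hE2, hlogRρ, hρval, ← ht00]
      rw [show (0:ℝ) * (1 - 0) = 0 by ring, Real.sqrt_zero]
      have hl2 : Real.log 2 ≠ 0 := ne_of_gt (Real.log_pos one_lt_two)
      generalize cS2 n g = S2v
      field_simp
      ring
    rw [hRHS]
    calc cubeD2 n f ≥ cubeD2 n g := cubeD2_abs_le n f
      _ = 2 * n * cS2 n g / 2^n := hD2g
  · -- 0 < t case
    have ht12 : t < 1/2 := by
      rcases eq_or_lt_of_le ht2 with h | h
      · exfalso
        have hbt : Real.binEntropy t = Real.log 2 := by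
          rw [h, show (1:ℝ)/2 = 2⁻¹ by norm_num]
          exact Real.binEntropy_two_inv
        rw [hbt] at htHb
        linarith
      · exact h
    have hB0 := Bfun_nonneg ht0p ht12
    have hBp := Bfun_pos ht0p ht12
    have hρne : ρ ≠ 0 := ne_of_gt hρpos
    set A := Real.log 2 - Real.binEntropy t + Bfun t * Gfun t with hAdef
    have hPt : ∀ ν : ℝ, 0 ≤ ν → ν ≤ 1 →
        Real.log 2 ≤ Real.binEntropy ν + A - Bfun t * Gfun ν := by
      intro ν h0 h1
      have := tangent_line ht0p ht12 h0 h1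
      rw [hAdef]
      linarith
    have hLC := LC A (Bfun t) hB0 hPt n g hgnn hS1p
    have hlogRval : Real.log R = n * Real.log 2 + Real.log (cS2 n g) - 2 * Real.log (cS1 n g) := by
      rw [hRval, Real.log_div (by positivity) (ne_of_gt (pow_pos hS1p 2)),
        Real.log_mul (by positivity) (ne_of_gt hS2p), Real.log_pow, Real.log_pow]
      push_cast
      ring
    have hXSle : cXS n g ≤ n * cS2 n g * Gfun t := by
      have h2 : Real.log R = n * (Real.log 2 - Real.binEntropy t) := by
        rw [hlogRρ, htHb]
        ring
      have heq : Real.log (cS2 n g) - 2 * Real.log (cS1 n g) + n * (Real.log 2 - A)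
          = -(n * (Bfun t * Gfun t)) := by
        rw [hAdef]
        linarith [hlogRval, h2]
      have hmul : cS2 n g * (Real.log (cS2 n g) - 2 * Real.log (cS1 n g) + n * (Real.log 2 - A))
          = -(cS2 n g * (n * (Bfun t * Gfun t))) := by
        rw [heq]
        ring
      have hr : cS2 n g * (n * (Bfun t * Gfun t)) = Bfun t * (n * cS2 n g * Gfun t) := by ring
      have h4 : Bfun t * cXS n g ≤ Bfun t * (n * cS2 n g * Gfun t) := by
        linarith [hLC, hmul, hr]
      exact le_of_mul_le_mul_left h4 hBp
    have hfinal : (2 * n * cS2 n g - 2 * (n * cS2 n g * Gfun t)) / 2^n ≤ cubeD2 n g := by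
      rw [cubeD2_eq]
      apply (div_le_div_iff_of_pos_right h2n).mpr
      linarith [hXSle]
    have hRHSeq : Cfun Hinv ρ * (cubeE n (fun x => f x ^ 2) * Real.log R)
        = (2 * n * cS2 n g - 2 * (n * cS2 n g * Gfun t)) / 2^n := by
      rw [hCfun, hE2, hlogRρ]
      rw [show Gfun t = 2 * Real.sqrt (t * (1-t)) from rfl]
      generalize cS2 n g = S2v
      field_simp
      ring
    rw [hRHSeq]
    calc cubeD2 n f ≥ cubeD2 n g := cubeD2_abs_le n f
      _ ≥ _ := hfinal
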